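/- For all integers ℓ ≥ 1 and n ≥ ℓ + 2, the total number of ℓ-peaks, summed over all flattened Catalan words of length n, equals (3^(n − ℓ − 2)·(2n + 1 − 2ℓ) − 1)/4. -/

import Mathlib

/-- `w : ℕ → ℕ` encodes a Catalan word of length `n` (0-indexed letters
`w 0, w 1, …, w (n-1)`): the first letter is `0`, each letter is at most the
previous one plus one, and `w` is normalized to vanish at positions `≥ n`. -/
def IsCatalanWord (n : ℕ) (w : ℕ → ℕ) : Prop :=
  w 0 = 0 ∧ (∀ i, i + 1 < n → w (i + 1) ≤ w i + 1) ∧ ∀ i, n ≤ i → w i = 0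

/-- `j` is the starting position of one of the maximal weakly increasing
contiguous subwords (runs of weak ascents) of the length-`n` word `w`. -/
def IsRunStart (n : ℕ) (w : ℕ → ℕ) (j : ℕ) : Prop :=
  j < n ∧ (j = 0 ∨ w j < w (j - 1))

/-- A word is flattened when the leading terms of its maximal weakly increasing
contiguous subwords, read from left to right, form a weakly increasing sequence. -/
def IsFlattened (n : ℕ) (w : ℕ → ℕ) : Prop :=
  ∀ i j, IsRunStart n w i → IsRunStart n w j → i ≤ j → w i ≤ w j

/-- The set of flattened Catalan words of length `n`. -/
def FlatCat (n : ℕ) : Set (ℕ → ℕ) := {w | IsCatalanWord n w ∧ IsFlattened n w}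

/-- Number of maximal strictly increasing contiguous subwords (runs of ascents):
`1 + #{ i : w_i ≥ w_{i+1} }`. -/
noncomputable def runsAsc (n : ℕ) (w : ℕ → ℕ) : ℕ :=
  1 + {i : ℕ | i + 1 < n ∧ w (i + 1) ≤ w i}.ncard

/-- Number of maximal weakly increasing contiguous subwords (runs of weak
ascents): `1 + #{ i : w_i > w_{i+1} }`. -/
noncomputable def wruns (n : ℕ) (w : ℕ → ℕ) : ℕ :=
  1 + {i : ℕ | i + 1 < n ∧ w (i + 1) < w i}.ncard

/-- Number of maximal strictly decreasing contiguous subwords (runs of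
descents): `1 + #{ i : w_i ≤ w_{i+1} }`. -/
noncomputable def runsDesc (n : ℕ) (w : ℕ → ℕ) : ℕ :=
  1 + {i : ℕ | i + 1 < n ∧ w i ≤ w (i + 1)}.ncard

/-- Number of maximal weakly decreasing contiguous subwords (runs of weak
descents): `1 + #{ i : w_i < w_{i+1} }`. -/
noncomputable def wrunsDesc (n : ℕ) (w : ℕ → ℕ) : ℕ :=
  1 + {i : ℕ | i + 1 < n ∧ w i < w (i + 1)}.ncard

/-- An `ℓ`-valley `a b^ℓ (b+1)` (with `a > b`) occurring at position `i` of the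
length-`n` word `w`. -/
def IsLValley (n : ℕ) (w : ℕ → ℕ) (ℓ i : ℕ) : Prop :=
  i + ℓ + 1 < n ∧ w (i + 1) < w i ∧ (∀ t, 1 ≤ t → t ≤ ℓ → w (i + t) = w (i + 1)) ∧
    w (i + ℓ + 1) = w (i + 1) + 1

/-- Number of `ℓ`-valleys of `w`. -/
noncomputable def lValleyCount (n : ℕ) (w : ℕ → ℕ) (ℓ : ℕ) : ℕ :=
  {i : ℕ | IsLValley n w ℓ i}.ncard

/-- Number of valleys of `w` (all `ℓ`-valleys, `ℓ ≥ 1`). -/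
noncomputable def valleyCount (n : ℕ) (w : ℕ → ℕ) : ℕ :=
  {p : ℕ × ℕ | 1 ≤ p.2 ∧ IsLValley n w p.2 p.1}.ncard

/-- A symmetric valley `a (a-1)^ℓ a` (with `ℓ ≥ 1`) occurring at position `i`. -/
def IsSymValley (n : ℕ) (w : ℕ → ℕ) (ℓ i : ℕ) : Prop :=
  i + ℓ + 1 < n ∧ w i = w (i + 1) + 1 ∧ (∀ t, 1 ≤ t → t ≤ ℓ → w (i + t) = w (i + 1)) ∧
    w (i + ℓ + 1) = w i

/-- Number of symmetric valleys of `w` (over all `ℓ ≥ 1`). -/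
noncomputable def symValleyCount (n : ℕ) (w : ℕ → ℕ) : ℕ :=
  {p : ℕ × ℕ | 1 ≤ p.2 ∧ IsSymValley n w p.2 p.1}.ncard

/-- An `ℓ`-peak `a (a+1)^ℓ b` (with `a ≥ b`) occurring at position `i` of the
length-`n` word `w`. -/
def IsLPeak (n : ℕ) (w : ℕ → ℕ) (ℓ i : ℕ) : Prop :=
  i + ℓ + 1 < n ∧ (∀ t, 1 ≤ t → t ≤ ℓ → w (i + t) = w i + 1) ∧ w (i + ℓ + 1) ≤ w i

/-- Number of `ℓ`-peaks of `w`. -/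
noncomputable def lPeakCount (n : ℕ) (w : ℕ → ℕ) (ℓ : ℕ) : ℕ :=
  {i : ℕ | IsLPeak n w ℓ i}.ncard

/-- Number of peaks of `w` (all `ℓ`-peaks, `ℓ ≥ 1`). -/
noncomputable def peakCount (n : ℕ) (w : ℕ → ℕ) : ℕ :=
  {p : ℕ × ℕ | 1 ≤ p.2 ∧ IsLPeak n w p.2 p.1}.ncard

/-- A symmetric peak `a (a+1)^ℓ a` (with `ℓ ≥ 1`) occurring at position `i`. -/
def IsSymPeak (n : ℕ) (w : ℕ → ℕ) (ℓ i : ℕ) : Prop :=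
  i + ℓ + 1 < n ∧ (∀ t, 1 ≤ t → t ≤ ℓ → w (i + t) = w i + 1) ∧ w (i + ℓ + 1) = w i

/-- Number of symmetric peaks of `w` (over all `ℓ ≥ 1`). -/
noncomputable def symPeakCount (n : ℕ) (w : ℕ → ℕ) : ℕ :=
  {p : ℕ × ℕ | 1 ≤ p.2 ∧ IsSymPeak n w p.2 p.1}.ncard

namespace FlatCatAux

/-- run-start predicate without the length bound -/
def RS (w : ℕ → ℕ) (j : ℕ) : Prop := j = 0 ∨ w j < w (j - 1)

instance (w : ℕ → ℕ) (j : ℕ) : Decidable (RS w j) := instDecidableOr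

/-- index of the last run start of a length-`n` word -/
def ls (n : ℕ) (w : ℕ → ℕ) : ℕ := Nat.findGreatest (RS w) (n - 1)

/-- value of the last run start -/
def sv (n : ℕ) (w : ℕ → ℕ) : ℕ := w (ls n w)

/-- last value minus last run-start value -/
def dv (n : ℕ) (w : ℕ → ℕ) : ℕ := w (n - 1) - sv n w

/-- extend a length-`n` word by one letter `y` -/
def ext (n : ℕ) (v : ℕ → ℕ) (y : ℕ) : ℕ → ℕ := fun i => if i = n then y else v i

/-- truncate to length `n` -/
def trunc (n : ℕ) (w : ℕ → ℕ) : ℕ → ℕ := fun i => if i < n then w i else 0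

/-- the word ends with an ascent followed by `j` flat steps -/
def Pat (j n : ℕ) (w : ℕ → ℕ) : Prop :=
  j + 2 ≤ n ∧ w (n - 1 - j) = w (n - 2 - j) + 1 ∧ ∀ t, t ≤ j → w (n - 1 - t) = w (n - 1 - j)

variable {n j y : ℕ} {w v : ℕ → ℕ}

lemma ls_le : ls n w ≤ n - 1 := Nat.findGreatest_le _

lemma rs_ls : RS w (ls n w) := Nat.findGreatest_spec (Nat.zero_le _) (Or.inl rfl)

lemma runStart_ls (hn : 1 ≤ n) : IsRunStart n w (ls n w) :=
  ⟨lt_of_le_of_lt ls_le (Nat.sub_lt hn one_pos), rs_ls⟩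

lemma not_rs_between (h1 : ls n w < j) (h2 : j ≤ n - 1) : ¬ RS w j :=
  Nat.findGreatest_is_greatest h1 h2

lemma mono_last_run (hj : ls n w ≤ j) (hj2 : j ≤ n - 1) : sv n w ≤ w j := by
  induction j with
  | zero => rw [sv, Nat.le_zero.mp hj]
  | succ k ih =>
    rcases Nat.lt_or_ge (ls n w) (k+1) with h | h
    · have hk : ¬ RS w (k+1) := not_rs_between h hj2
      have : w k ≤ w (k+1) := by
        by_contra hlt
        exact hk (Or.inr (by simpa using Nat.lt_of_not_le hlt))
      exact le_trans (ih (Nat.lt_succ_iff.mp h) (le_trans (Nat.le_succ k) hj2)) this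
    · have : ls n w = k + 1 := le_antisymm hj h
      simp [sv, this]

lemma sv_le_last (hn : 1 ≤ n) : sv n w ≤ w (n - 1) := mono_last_run ls_le le_rfl

lemma runStart_val_le (hw : w ∈ FlatCat n) (hn : 1 ≤ n) (hj : IsRunStart n w j) :
    w j ≤ sv n w := by
  rcases le_or_gt j (ls n w) with h | h
  · exact hw.2 j (ls n w) hj (runStart_ls hn) h
  · exact absurd hj.2 (not_rs_between h (Nat.le_sub_one_of_lt hj.1))

end FlatCatAux

namespace FlatCatAux

variable {n j y i : ℕ} {w v : ℕ → ℕ}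

lemma findGreatest_congr {P Q : ℕ → Prop} [DecidablePred P] [DecidablePred Q] :
    ∀ {m : ℕ}, (∀ k, k ≤ m → (P k ↔ Q k)) → Nat.findGreatest P m = Nat.findGreatest Q m
  | 0, _ => rfl
  | (m+1), h => by
    rw [Nat.findGreatest_succ, Nat.findGreatest_succ,
      findGreatest_congr (fun k hk => h k (le_trans hk (Nat.le_succ m)))]
    by_cases hp : P (m+1)
    · rw [if_pos hp, if_pos ((h (m+1) le_rfl).mp hp)]
    · rw [if_neg hp, if_neg (fun hq => hp ((h (m+1) le_rfl).mpr hq))]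

lemma ext_apply_ne (h : i ≠ n) : ext n v y i = v i := if_neg h

lemma ext_apply_self : ext n v y n = y := if_pos rfl

lemma rs_ext_iff (hn : 1 ≤ n) (hj : j ≤ n - 1) : RS (ext n v y) j ↔ RS v j := by
  have h1 : j ≠ n := by omega
  have h2 : j - 1 ≠ n := by omega
  unfold RS
  rw [ext_apply_ne h1, ext_apply_ne h2]

lemma isRunStart_ext_iff (hj : j < n) : IsRunStart (n+1) (ext n v y) j ↔ IsRunStart n v j := by
  have h1 : j ≠ n := by omega
  have h2 : j - 1 ≠ n := by omega
  unfold IsRunStart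
  rw [ext_apply_ne h1, ext_apply_ne h2]
  constructor <;> rintro ⟨h, h'⟩ <;> exact ⟨by omega, h'⟩

lemma ls_ext_of_ge (hn : 1 ≤ n) (hy : v (n-1) ≤ y) : ls (n+1) (ext n v y) = ls n v := by
  have hns : n - 1 + 1 = n := Nat.succ_pred_eq_of_pos hn
  have hrs : ¬ RS (ext n v y) n := by
    intro h
    rcases h with h | h
    · omega
    · rw [ext_apply_self, ext_apply_ne (by omega : n - 1 ≠ n)] at h; omega
  have key : ∀ (u : ℕ → ℕ), ¬ RS u n → Nat.findGreatest (RS u) n = Nat.findGreatest (RS u) (n-1) := by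
    intro u hu
    rw [← hns, Nat.findGreatest_succ, if_neg (by rwa [hns]), hns]
  unfold ls
  simp only [Nat.add_sub_cancel]
  rw [key _ hrs]
  exact findGreatest_congr (fun k hk => rs_ext_iff hn hk)

lemma ls_ext_of_lt (hn : 1 ≤ n) (hy : y < v (n-1)) : ls (n+1) (ext n v y) = n := by
  have hrs : RS (ext n v y) n := by
    right
    rw [ext_apply_self, ext_apply_ne (by omega : n - 1 ≠ n)]
    exact hy
  unfold ls
  simp only [Nat.add_sub_cancel]
  exact Nat.findGreatest_eq hrs

lemma sv_ext_of_ge (hn : 1 ≤ n) (hy : v (n-1) ≤ y) : sv (n+1) (ext n v y) = sv n v := by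
  rw [sv, ls_ext_of_ge hn hy, ext_apply_ne (by have := ls_le (n := n) (w := v); omega), sv]

lemma dv_ext_up (hn : 1 ≤ n) (hy : y = v (n-1) + 1) :
    dv (n+1) (ext n v y) = dv n v + 1 := by
  have h1 := sv_le_last (n := n) (w := v) hn
  rw [dv, sv_ext_of_ge hn (by omega), Nat.add_sub_cancel, ext_apply_self, dv]
  omega

lemma dv_ext_flat (hn : 1 ≤ n) (hy : y = v (n-1)) :
    dv (n+1) (ext n v y) = dv n v := by
  rw [dv, sv_ext_of_ge hn (by omega), Nat.add_sub_cancel, ext_apply_self, dv, hy]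

lemma dv_ext_down (hn : 1 ≤ n) (hy : y < v (n-1)) :
    dv (n+1) (ext n v y) = 0 := by
  rw [dv, sv, ls_ext_of_lt hn hy, Nat.add_sub_cancel, ext_apply_self]
  omega

end FlatCatAux

namespace FlatCatAux

variable {n j y i : ℕ} {w v : ℕ → ℕ}

lemma ext_mem_iff (hn : 1 ≤ n) (hv : v ∈ FlatCat n) :
    ext n v y ∈ FlatCat (n+1) ↔ sv n v ≤ y ∧ y ≤ v (n-1) + 1 := by
  obtain ⟨⟨hv0, hvstep, hvtail⟩, hvflat⟩ := hv
  constructor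
  · rintro ⟨⟨-, hstep, -⟩, hflat⟩
    have hy : y ≤ v (n-1) + 1 := by
      have := hstep (n-1) (by omega)
      rwa [(by omega : n - 1 + 1 = n), ext_apply_self,
        ext_apply_ne (by omega : n - 1 ≠ n)] at this
    refine ⟨?_, hy⟩
    rcases le_or_gt (v (n-1)) y with h | h
    · exact le_trans (sv_le_last hn) h
    · have hrsn : IsRunStart (n+1) (ext n v y) n := by
        refine ⟨by omega, Or.inr ?_⟩
        rwa [ext_apply_self, ext_apply_ne (by omega : n - 1 ≠ n)]
      have hrsl : IsRunStart (n+1) (ext n v y) (ls n v) :=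
        (isRunStart_ext_iff (by have := ls_le (n := n) (w := v); omega)).mpr (runStart_ls hn)
      have := hflat (ls n v) n hrsl hrsn (by have := ls_le (n := n) (w := v); omega)
      rwa [ext_apply_self, ext_apply_ne (by have := ls_le (n := n) (w := v); omega)] at this
  · rintro ⟨hs, hy⟩
    refine ⟨⟨?_, ?_, ?_⟩, ?_⟩
    · rw [ext_apply_ne (by omega : 0 ≠ n)]; exact hv0
    · intro i hi
      rcases Nat.lt_or_ge (i+1) n with h | h
      · rw [ext_apply_ne (by omega : i + 1 ≠ n), ext_apply_ne (by omega : i ≠ n)]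
        exact hvstep i h
      · have hin : i + 1 = n := by omega
        have : i = n - 1 := by omega
        rw [hin, ext_apply_self, ext_apply_ne (by omega : i ≠ n), this]
        exact hy
    · intro i hi
      rw [ext_apply_ne (by omega : i ≠ n)]
      exact hvtail i (by omega)
    · intro a b ha hb hab
      have hb1 : b < n + 1 := hb.1
      rcases Nat.lt_or_ge b n with hbn | hbn
      · have han : a < n := lt_of_le_of_lt hab hbn
        rw [ext_apply_ne (by omega : a ≠ n), ext_apply_ne (by omega : b ≠ n)]
        exact hvflat a b ((isRunStart_ext_iff han).mp ha) ((isRunStart_ext_iff hbn).mp hb) hab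
      · have hbn' : b = n := by omega
        rcases Nat.lt_or_ge a n with han | han
        · rw [ext_apply_ne (by omega : a ≠ n), hbn', ext_apply_self]
          exact le_trans (runStart_val_le ⟨⟨hv0, hvstep, hvtail⟩, hvflat⟩ hn
            ((isRunStart_ext_iff han).mp ha)) hs
        · have : a = n := by omega
          rw [this, hbn']

lemma trunc_apply_lt (h : i < n) : trunc n w i = w i := if_pos h

lemma trunc_mem (hn : 1 ≤ n) (hw : w ∈ FlatCat (n+1)) : trunc n w ∈ FlatCat n := by
  obtain ⟨⟨hw0, hwstep, hwtail⟩, hwflat⟩ := hw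
  refine ⟨⟨?_, ?_, ?_⟩, ?_⟩
  · rw [trunc_apply_lt hn]; exact hw0
  · intro i hi
    rw [trunc_apply_lt hi, trunc_apply_lt (by omega)]
    exact hwstep i (by omega)
  · intro i hi
    exact if_neg (by omega)
  · intro a b ha hb hab
    have han : a < n := ha.1
    have hbn : b < n := hb.1
    have key : ∀ c, c < n → (IsRunStart n (trunc n w) c ↔ IsRunStart (n+1) w c) := by
      intro c hc
      unfold IsRunStart
      rw [trunc_apply_lt hc, trunc_apply_lt (by omega : c - 1 < n)]
      constructor <;> rintro ⟨-, h'⟩ <;> exact ⟨by omega, h'⟩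
    rw [trunc_apply_lt han, trunc_apply_lt hbn]
    exact hwflat a b ((key a han).mp ha) ((key b hbn).mp hb) hab

lemma ext_trunc (hw : w ∈ FlatCat (n+1)) : ext n (trunc n w) (w n) = w := by
  funext i
  rcases Nat.lt_trichotomy i n with h | h | h
  · rw [ext_apply_ne (by omega), trunc_apply_lt h]
  · rw [h, ext_apply_self]
  · rw [ext_apply_ne (by omega)]
    rw [hw.1.2.2 i (by omega)]
    exact if_neg (by omega)

lemma ext_inj (h : ext n v y = ext n w i) (hv : ∀ k, n ≤ k → v k = 0)
    (hw : ∀ k, n ≤ k → w k = 0) : v = w ∧ y = i := by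
  constructor
  · funext k
    rcases eq_or_ne k n with hk | hk
    · rw [hk, hv n le_rfl, hw n le_rfl]
    · have := congrFun h k
      rwa [ext_apply_ne hk, ext_apply_ne hk] at this
  · have := congrFun h n
    rwa [ext_apply_self, ext_apply_self] at this

lemma flatcat_succ_eq (hn : 1 ≤ n) :
    FlatCat (n+1) = ⋃ v ∈ FlatCat n, ext n v '' Set.Icc (sv n v) (v (n-1) + 1) := by
  ext w
  simp only [Set.mem_iUnion, Set.mem_image, Set.mem_Icc]
  constructor
  · intro hw
    refine ⟨trunc n w, trunc_mem hn hw, w n, ?_, ext_trunc hw⟩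
    have := (ext_mem_iff hn (trunc_mem hn hw)).mp (by rw [ext_trunc hw]; exact hw)
    exact this
  · rintro ⟨v, hv, z, hz, rfl⟩
    exact (ext_mem_iff hn hv).mpr hz

lemma cat_le (hw : IsCatalanWord n w) : ∀ i, i < n → w i ≤ i := by
  intro i
  induction i with
  | zero => intro _; rw [hw.1]
  | succ k ih => intro h; exact le_trans (hw.2.1 k h) (by have := ih (by omega); omega)

lemma flatcat_finite (n : ℕ) : (FlatCat n).Finite := by
  have : FlatCat n ⊆ Set.range (fun (g : Fin n → Fin (n+1)) (i : ℕ) =>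
      if h : i < n then (g ⟨i, h⟩ : ℕ) else 0) := by
    intro w hw
    refine ⟨fun i => ⟨w i, by have := cat_le hw.1 i i.2; omega⟩, ?_⟩
    funext i
    by_cases h : i < n
    · simp [h]
    · simp [h, hw.1.2.2 i (by omega)]
  exact Set.Finite.subset (Set.finite_range _) this

end FlatCatAux

namespace FlatCatAux

variable {n j y i ℓ : ℕ} {w v : ℕ → ℕ}

open scoped Classical in
lemma pat_ext_zero (hn : 1 ≤ n) : Pat 0 (n+1) (ext n v y) ↔ y = v (n-1) + 1 := by
  unfold Pat
  rw [(by omega : n + 1 - 1 - 0 = n), (by omega : n + 1 - 2 - 0 = n - 1),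
    ext_apply_self, ext_apply_ne (by omega : n - 1 ≠ n)]
  constructor
  · rintro ⟨-, h2, -⟩; exact h2
  · intro h
    exact ⟨by omega, h, fun t ht => by rw [Nat.le_zero.mp ht, (by omega : n+1-1-0 = n), ext_apply_self]⟩

lemma pat_ext_succ (k : ℕ) : Pat (k+1) (n+1) (ext n v y) ↔ y = v (n-1) ∧ Pat k n v := by
  unfold Pat
  constructor
  · rintro ⟨hlen, hup, hflat⟩
    have hkn : k + 2 ≤ n := by omega
    have h0 := hflat 0 (Nat.zero_le _)
    have h1 := hflat 1 (by omega)
    rw [(by omega : n + 1 - 1 - 0 = n), ext_apply_self,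
      (by omega : n + 1 - 1 - (k+1) = n - 1 - k),
      ext_apply_ne (by omega : n - 1 - k ≠ n)] at h0
    rw [(by omega : n + 1 - 1 - 1 = n - 1), ext_apply_ne (by omega : n - 1 ≠ n),
      (by omega : n + 1 - 1 - (k+1) = n - 1 - k),
      ext_apply_ne (by omega : n - 1 - k ≠ n)] at h1
    rw [(by omega : n + 1 - 1 - (k+1) = n - 1 - k),
      (by omega : n + 1 - 2 - (k+1) = n - 2 - k),
      ext_apply_ne (by omega : n - 1 - k ≠ n),
      ext_apply_ne (by omega : n - 2 - k ≠ n)] at hup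
    refine ⟨by rw [h0, h1], hkn, hup, ?_⟩
    intro t ht
    have h2 := hflat (t+1) (by omega)
    rw [(by omega : n + 1 - 1 - (t+1) = n - 1 - t),
      ext_apply_ne (by omega : n - 1 - t ≠ n),
      (by omega : n + 1 - 1 - (k+1) = n - 1 - k),
      ext_apply_ne (by omega : n - 1 - k ≠ n)] at h2
    exact h2
  · rintro ⟨hy, hkn, hup, hflat⟩
    refine ⟨by omega, ?_, ?_⟩
    · rw [(by omega : n + 1 - 1 - (k+1) = n - 1 - k),
        (by omega : n + 1 - 2 - (k+1) = n - 2 - k),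
        ext_apply_ne (by omega : n - 1 - k ≠ n),
        ext_apply_ne (by omega : n - 2 - k ≠ n)]
      exact hup
    · intro t ht
      rw [(by omega : n + 1 - 1 - (k+1) = n - 1 - k),
        ext_apply_ne (by omega : n - 1 - k ≠ n)]
      rcases Nat.eq_zero_or_pos t with rfl | htpos
      · rw [(by omega : n + 1 - 1 - 0 = n), ext_apply_self, hy]
        have := hflat 0 (Nat.zero_le _)
        rwa [(by omega : n - 1 - 0 = n - 1)] at this
      · rw [(by omega : n + 1 - 1 - t = n - 1 - (t - 1)),
          ext_apply_ne (by omega : n - 1 - (t-1) ≠ n)]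
        exact hflat (t-1) (by omega)

lemma isLPeak_ext_iff (hℓ : 1 ≤ ℓ) (hn : 1 ≤ n) (i : ℕ) :
    IsLPeak (n+1) (ext n v y) ℓ i ↔
      IsLPeak n v ℓ i ∨ (i + ℓ + 1 = n ∧ Pat (ℓ-1) n v ∧ y < v (n-1)) := by
  unfold IsLPeak
  rcases Nat.lt_trichotomy (i + ℓ + 1) n with hc | hc | hc
  · constructor
    · rintro ⟨-, hflat, hdesc⟩
      refine Or.inl ⟨hc, ?_, ?_⟩
      · intro t h1 h2
        have := hflat t h1 h2
        rwa [ext_apply_ne (by omega : i + t ≠ n), ext_apply_ne (by omega : i ≠ n)] at this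
      · rwa [ext_apply_ne (by omega : i + ℓ + 1 ≠ n), ext_apply_ne (by omega : i ≠ n)] at hdesc
    · rintro (⟨-, hflat, hdesc⟩ | ⟨h, -, -⟩)
      · refine ⟨by omega, ?_, ?_⟩
        · intro t h1 h2
          rw [ext_apply_ne (by omega : i + t ≠ n), ext_apply_ne (by omega : i ≠ n)]
          exact hflat t h1 h2
        · rw [ext_apply_ne (by omega : i + ℓ + 1 ≠ n), ext_apply_ne (by omega : i ≠ n)]
          exact hdesc
      · omega
  · constructor
    · rintro ⟨-, hflat, hdesc⟩
      have hflat' : ∀ t, 1 ≤ t → t ≤ ℓ → v (i + t) = v i + 1 := by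
        intro t h1 h2
        have := hflat t h1 h2
        rwa [ext_apply_ne (by omega : i + t ≠ n), ext_apply_ne (by omega : i ≠ n)] at this
      rw [(by omega : i + ℓ + 1 = n), ext_apply_self, ext_apply_ne (by omega : i ≠ n)] at hdesc
      refine Or.inr ⟨hc, ⟨by omega, ?_, ?_⟩, ?_⟩
      · rw [(by omega : n - 1 - (ℓ-1) = i + 1), (by omega : n - 2 - (ℓ-1) = i)]
        exact hflat' 1 le_rfl hℓ
      · intro t ht
        rw [(by omega : n - 1 - t = i + (ℓ - t)), (by omega : n - 1 - (ℓ-1) = i + 1),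
          hflat' (ℓ - t) (by omega) (by omega), hflat' 1 le_rfl hℓ]
      · rw [(by omega : n - 1 = i + ℓ), hflat' ℓ hℓ le_rfl]
        omega
    · rintro (⟨h, -, -⟩ | ⟨-, ⟨hlen, hup, hflat⟩, hy⟩)
      · omega
      · have hupi : v (i + 1) = v i + 1 := by
          rw [(by omega : i + 1 = n - 1 - (ℓ-1)), hup, (by omega : n - 2 - (ℓ-1) = i)]
        have hflat' : ∀ t, 1 ≤ t → t ≤ ℓ → v (i + t) = v i + 1 := by
          intro t h1 h2
          rw [(by omega : i + t = n - 1 - (ℓ - t)), hflat (ℓ - t) (by omega),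
            (by omega : n - 1 - (ℓ-1) = i + 1), hupi]
        refine ⟨by omega, ?_, ?_⟩
        · intro t h1 h2
          rw [ext_apply_ne (by omega : i + t ≠ n), ext_apply_ne (by omega : i ≠ n)]
          exact hflat' t h1 h2
        · rw [(by omega : i + ℓ + 1 = n), ext_apply_self, ext_apply_ne (by omega : i ≠ n)]
          have := hy
          rw [(by omega : n - 1 = i + ℓ), hflat' ℓ hℓ le_rfl] at this
          omega
  · constructor
    · rintro ⟨hb, -, -⟩; omega
    · rintro (⟨hb, -, -⟩ | ⟨hb, -, -⟩) <;> omega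

lemma peaks_finite (n : ℕ) (w : ℕ → ℕ) (ℓ : ℕ) : {i : ℕ | IsLPeak n w ℓ i}.Finite :=
  Set.Finite.subset (Set.finite_Iio n) (fun i hi => by
    simp only [Set.mem_Iio]; have := hi.1; omega)

lemma lPeakCount_eq_zero (h : n ≤ ℓ + 1) : lPeakCount n w ℓ = 0 := by
  unfold lPeakCount
  convert Set.ncard_empty ℕ
  ext i
  simp only [Set.mem_setOf_eq, Set.mem_empty_iff_false, iff_false]
  intro hp
  have := hp.1
  omega

open scoped Classical in
lemma lPeakCount_ext (hℓ : 1 ≤ ℓ) (hn : 1 ≤ n) :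
    lPeakCount (n+1) (ext n v y) ℓ =
      lPeakCount n v ℓ + (if Pat (ℓ-1) n v ∧ y < v (n-1) then 1 else 0) := by
  unfold lPeakCount
  by_cases hcond : Pat (ℓ-1) n v ∧ y < v (n-1)
  · rw [if_pos hcond]
    have hln : ℓ + 1 ≤ n := by have := hcond.1.1; omega
    have hset : {i : ℕ | IsLPeak (n+1) (ext n v y) ℓ i} =
        insert (n - ℓ - 1) {i : ℕ | IsLPeak n v ℓ i} := by
      ext i
      simp only [Set.mem_setOf_eq, Set.mem_insert_iff, isLPeak_ext_iff hℓ hn]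
      constructor
      · rintro (h | ⟨h1, -⟩)
        · exact Or.inr h
        · exact Or.inl (by omega)
      · rintro (h | h)
        · exact Or.inr ⟨by omega, hcond.1, hcond.2⟩
        · exact Or.inl h
    have hnm : n - ℓ - 1 ∉ {i : ℕ | IsLPeak n v ℓ i} := by
      intro hmem
      have := hmem.1
      omega
    rw [hset, Set.ncard_insert_of_notMem hnm (peaks_finite n v ℓ)]
  · rw [if_neg hcond]
    have hset : {i : ℕ | IsLPeak (n+1) (ext n v y) ℓ i} = {i : ℕ | IsLPeak n v ℓ i} := by
      ext i
      simp only [Set.mem_setOf_eq, isLPeak_ext_iff hℓ hn]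
      constructor
      · rintro (h | ⟨-, h2, h3⟩)
        · exact h
        · exact absurd ⟨h2, h3⟩ hcond
      · exact Or.inl
    rw [hset]
    omega

end FlatCatAux

namespace FlatCatAux

open scoped Classical

variable {n j y i ℓ : ℕ} {w v : ℕ → ℕ}

noncomputable def FC (n : ℕ) : Finset (ℕ → ℕ) := (flatcat_finite n).toFinset

lemma mem_FC : w ∈ FC n ↔ w ∈ FlatCat n := Set.Finite.mem_toFinset _

lemma FC_succ (hn : 1 ≤ n) :
    FC (n+1) = (FC n).biUnion (fun v => (Finset.Icc (sv n v) (v (n-1) + 1)).image (ext n v)) := by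
  ext w
  rw [mem_FC, Finset.mem_biUnion]
  rw [flatcat_succ_eq hn]
  simp only [Set.mem_iUnion, Set.mem_image, Set.mem_Icc, Finset.mem_image, Finset.mem_Icc, mem_FC]
  constructor
  · rintro ⟨v, hv, z, hz, rfl⟩; exact ⟨v, hv, z, hz, rfl⟩
  · rintro ⟨v, hv, z, hz, rfl⟩; exact ⟨v, hv, z, hz, rfl⟩

lemma sum_ext (hn : 1 ≤ n) (f : (ℕ → ℕ) → ℚ) :
    ∑ w ∈ FC (n+1), f w =
      ∑ v ∈ FC n, ∑ y ∈ Finset.Icc (sv n v) (v (n-1) + 1), f (ext n v y) := by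
  rw [FC_succ hn, Finset.sum_biUnion]
  · refine Finset.sum_congr rfl (fun v hv => ?_)
    rw [Finset.sum_image]
    intro y1 _ y2 _ h
    have := congrFun h n
    rwa [ext_apply_self, ext_apply_self] at this
  · intro v1 h1 v2 h2 hne
    simp only [Function.onFun]
    rw [Finset.disjoint_left]
    intro a ha1 ha2
    simp only [Finset.mem_image, Finset.mem_Icc] at ha1 ha2
    obtain ⟨z1, -, he1⟩ := ha1
    obtain ⟨z2, -, he2⟩ := ha2
    rw [Finset.mem_coe, mem_FC] at h1 h2
    exact hne (ext_inj (he1.trans he2.symm) h1.1.2.2 h2.1.2.2).1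

lemma sum_Icc_eval {s x : ℕ} (h : s ≤ x) (F : ℕ → ℚ) (a b c : ℚ)
    (h1 : F (x+1) = a) (h2 : F x = b) (h3 : ∀ z, s ≤ z → z < x → F z = c) :
    ∑ y ∈ Finset.Icc s (x+1), F y = a + b + ((x - s : ℕ) : ℚ) * c := by
  have e1 : Finset.Icc s (x+1) = insert (x+1) (insert x (Finset.Ico s x)) := by
    ext z
    simp only [Finset.mem_Icc, Finset.mem_insert, Finset.mem_Ico]
    omega
  rw [e1, Finset.sum_insert (by simp only [Finset.mem_insert, Finset.mem_Ico]; omega),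
    Finset.sum_insert (by simp only [Finset.mem_Ico]; omega), h1, h2]
  have e2 : ∑ y ∈ Finset.Ico s x, F y = ∑ _y ∈ Finset.Ico s x, c := by
    refine Finset.sum_congr rfl (fun z hz => ?_)
    rw [Finset.mem_Ico] at hz
    exact h3 z hz.1 hz.2
  rw [e2, Finset.sum_const, Nat.card_Ico, nsmul_eq_mul]
  ring

noncomputable def AQ (n : ℕ) : ℚ := ∑ w ∈ FC n, (1:ℚ)
noncomputable def DQ (n : ℕ) : ℚ := ∑ w ∈ FC n, ((dv n w : ℕ) : ℚ)
noncomputable def SQ (ℓ n : ℕ) : ℚ := ∑ w ∈ FC n, ((lPeakCount n w ℓ : ℕ) : ℚ)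
noncomputable def MQ (ℓ n : ℕ) : ℚ :=
  ∑ w ∈ FC n, ((lPeakCount n w ℓ : ℕ) : ℚ) * ((dv n w : ℕ) : ℚ)
noncomputable def EQ (j n : ℕ) : ℚ :=
  ∑ w ∈ FC n, (if Pat j n w then ((dv n w : ℕ) : ℚ) else 0)

end FlatCatAux

namespace FlatCatAux

open scoped Classical

variable {n ℓ j : ℕ}

lemma rec_A (hn : 1 ≤ n) : AQ (n+1) = 2 * AQ n + DQ n := by
  unfold AQ DQ
  rw [sum_ext hn (fun _ => (1:ℚ)), Finset.mul_sum, ← Finset.sum_add_distrib]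
  refine Finset.sum_congr rfl (fun v hv => ?_)
  rw [sum_Icc_eval (sv_le_last hn) _ 1 1 1 rfl rfl (fun z _ _ => rfl)]
  unfold dv
  ring

lemma rec_D (hn : 1 ≤ n) : DQ (n+1) = AQ n + 2 * DQ n := by
  unfold AQ DQ
  rw [sum_ext hn (fun w => ((dv (n+1) w : ℕ) : ℚ)), Finset.mul_sum, ← Finset.sum_add_distrib]
  refine Finset.sum_congr rfl (fun v hv => ?_)
  rw [sum_Icc_eval (sv_le_last hn) _ (((dv n v : ℕ):ℚ) + 1) ((dv n v : ℕ):ℚ) 0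
    (by rw [dv_ext_up hn rfl]; push_cast; ring)
    (by rw [dv_ext_flat hn rfl])
    (fun z hz1 hz2 => by rw [dv_ext_down hn hz2]; simp)]
  unfold dv
  ring

lemma rec_S (hℓ : 1 ≤ ℓ) (hn : 1 ≤ n) :
    SQ ℓ (n+1) = 2 * SQ ℓ n + MQ ℓ n + EQ (ℓ-1) n := by
  unfold SQ MQ EQ
  rw [sum_ext hn (fun w => ((lPeakCount (n+1) w ℓ : ℕ) : ℚ)), Finset.mul_sum,
    ← Finset.sum_add_distrib, ← Finset.sum_add_distrib]
  refine Finset.sum_congr rfl (fun v hv => ?_)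
  rw [sum_Icc_eval (sv_le_last hn) _ ((lPeakCount n v ℓ : ℕ):ℚ) ((lPeakCount n v ℓ : ℕ):ℚ)
    (((lPeakCount n v ℓ : ℕ):ℚ) + (if Pat (ℓ-1) n v then 1 else 0))
    (by rw [lPeakCount_ext hℓ hn, if_neg (fun h => by omega)]; simp)
    (by rw [lPeakCount_ext hℓ hn, if_neg (fun h => by omega)]; simp)
    (fun z hz1 hz2 => by
      rw [lPeakCount_ext hℓ hn]
      by_cases hp : Pat (ℓ-1) n v
      · rw [if_pos ⟨hp, hz2⟩, if_pos hp]; push_cast; ring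
      · rw [if_neg (fun h => hp h.1), if_neg hp]; simp)]
  unfold dv
  by_cases hp : Pat (ℓ-1) n v
  · rw [if_pos hp, if_pos hp]; ring
  · rw [if_neg hp, if_neg hp]; ring

lemma rec_M (hℓ : 1 ≤ ℓ) (hn : 1 ≤ n) :
    MQ ℓ (n+1) = SQ ℓ n + 2 * MQ ℓ n := by
  unfold SQ MQ
  rw [sum_ext hn (fun w => ((lPeakCount (n+1) w ℓ : ℕ) : ℚ) * ((dv (n+1) w : ℕ) : ℚ)),
    Finset.mul_sum, ← Finset.sum_add_distrib]
  refine Finset.sum_congr rfl (fun v hv => ?_)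
  rw [sum_Icc_eval (sv_le_last hn) _
    (((lPeakCount n v ℓ : ℕ):ℚ) * (((dv n v : ℕ):ℚ) + 1))
    (((lPeakCount n v ℓ : ℕ):ℚ) * ((dv n v : ℕ):ℚ)) 0
    (by rw [lPeakCount_ext hℓ hn, if_neg (fun h => by omega), dv_ext_up hn rfl]
        push_cast; ring)
    (by rw [lPeakCount_ext hℓ hn, if_neg (fun h => by omega), dv_ext_flat hn rfl]
        push_cast; ring)
    (fun z hz1 hz2 => by rw [dv_ext_down hn hz2]; simp)]
  unfold dv
  ring

lemma rec_E0 (hn : 1 ≤ n) : EQ 0 (n+1) = AQ n + DQ n := by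
  unfold AQ DQ EQ
  rw [sum_ext hn (fun w => if Pat 0 (n+1) w then ((dv (n+1) w : ℕ) : ℚ) else 0),
    ← Finset.sum_add_distrib]
  refine Finset.sum_congr rfl (fun v hv => ?_)
  rw [sum_Icc_eval (sv_le_last hn) _ (((dv n v : ℕ):ℚ) + 1) 0 0
    (by rw [if_pos ((pat_ext_zero hn).mpr rfl), dv_ext_up hn rfl]; push_cast; ring)
    (by rw [if_neg (fun h => by have := (pat_ext_zero hn).mp h; omega)])
    (fun z hz1 hz2 => by
      rw [if_neg (fun h => by have := (pat_ext_zero hn).mp h; omega)])]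
  ring

lemma rec_E (hn : 1 ≤ n) (j : ℕ) : EQ (j+1) (n+1) = EQ j n := by
  unfold EQ
  rw [sum_ext hn (fun w => if Pat (j+1) (n+1) w then ((dv (n+1) w : ℕ) : ℚ) else 0)]
  refine Finset.sum_congr rfl (fun v hv => ?_)
  rw [sum_Icc_eval (sv_le_last hn) _ 0
    (if Pat j n v then ((dv n v : ℕ):ℚ) else 0) 0
    (by rw [if_neg (fun h => by have := ((pat_ext_succ j).mp h).1; omega)])
    (by by_cases hp : Pat j n v
        · rw [if_pos ((pat_ext_succ j).mpr ⟨rfl, hp⟩), dv_ext_flat hn rfl, if_pos hp]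
        · rw [if_neg (fun h => hp ((pat_ext_succ j).mp h).2), if_neg hp])
    (fun z hz1 hz2 => by
      rw [if_neg (fun h => by have := ((pat_ext_succ j).mp h).1; omega)])]
  ring

end FlatCatAux

namespace FlatCatAux

open scoped Classical

variable {n ℓ j : ℕ}

lemma flatcat_one : FlatCat 1 = {fun _ : ℕ => 0} := by
  ext w
  simp only [Set.mem_singleton_iff]
  constructor
  · rintro ⟨⟨h0, -, htail⟩, -⟩
    funext i
    rcases Nat.eq_zero_or_pos i with rfl | hi
    · exact h0
    · exact htail i hi
  · rintro rfl
    exact ⟨⟨rfl, fun i hi => by omega, fun i _ => rfl⟩, fun a b _ _ _ => le_refl 0⟩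

lemma AQ_one : AQ 1 = 1 := by
  unfold AQ FC
  simp [flatcat_one]

lemma DQ_one : DQ 1 = 0 := by
  unfold DQ FC
  simp only [flatcat_one, Set.Finite.toFinset_singleton, Finset.sum_singleton]
  norm_num [dv, sv, ls]

lemma SQ_zero (h : n ≤ ℓ + 1) : SQ ℓ n = 0 :=
  Finset.sum_eq_zero fun w _ => by rw [lPeakCount_eq_zero h]; simp

lemma MQ_zero (h : n ≤ ℓ + 1) : MQ ℓ n = 0 :=
  Finset.sum_eq_zero fun w _ => by rw [lPeakCount_eq_zero h]; simp

lemma EQ_zero (h : n ≤ j + 1) : EQ j n = 0 :=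
  Finset.sum_eq_zero fun w _ => if_neg (fun hp => by have := hp.1; omega)

lemma AD_closed : ∀ m : ℕ, AQ (m+1) = ((3:ℚ)^m + 1)/2 ∧ DQ (m+1) = ((3:ℚ)^m - 1)/2 := by
  intro m
  induction m with
  | zero => norm_num [AQ_one, DQ_one]
  | succ k ih =>
    obtain ⟨hA, hD⟩ := ih
    constructor
    · rw [rec_A (by omega), hA, hD]; ring
    · rw [rec_D (by omega), hA, hD]; ring

lemma E_closed : ∀ (j m : ℕ), EQ j (j+2+m) = (3:ℚ)^m := by
  intro j
  induction j with
  | zero =>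
    intro m
    rw [show 0+2+m = (m+1)+1 by omega, rec_E0 (by omega),
      (AD_closed m).1, (AD_closed m).2]
    ring
  | succ k ih =>
    intro m
    rw [show k+1+2+m = (k+2+m)+1 by omega, rec_E (by omega) k, ih m]

lemma SM_closed (hℓ : 1 ≤ ℓ) : ∀ m : ℕ,
    SQ ℓ (ℓ+2+m) = ((3:ℚ)^m * (2*(m:ℚ)+5) - 1)/4 ∧
    MQ ℓ (ℓ+2+m) = ((3:ℚ)^m * (2*(m:ℚ)-1) + 1)/4 := by
  intro m
  induction m with
  | zero =>
    have h1 : EQ (ℓ-1) (ℓ+1) = 1 := by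
      rw [show ℓ+1 = (ℓ-1)+2+0 by omega, E_closed]
      norm_num
    constructor
    · rw [show ℓ+2+0 = (ℓ+1)+1 by omega, rec_S hℓ (by omega),
        SQ_zero le_rfl, MQ_zero le_rfl, h1]
      norm_num
    · rw [show ℓ+2+0 = (ℓ+1)+1 by omega, rec_M hℓ (by omega),
        SQ_zero le_rfl, MQ_zero le_rfl]
      norm_num
  | succ k ih =>
    obtain ⟨hS, hM⟩ := ih
    have hE : EQ (ℓ-1) (ℓ+2+k) = (3:ℚ)^(k+1) := by
      rw [show ℓ+2+k = (ℓ-1)+2+(k+1) by omega, E_closed]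
    constructor
    · rw [show ℓ+2+(k+1) = (ℓ+2+k)+1 by omega, rec_S hℓ (by omega), hS, hM, hE]
      push_cast
      ring
    · rw [show ℓ+2+(k+1) = (ℓ+2+k)+1 by omega, rec_M hℓ (by omega), hS, hM]
      push_cast
      ring

end FlatCatAux

open FlatCatAux

/-- For `ℓ ≥ 1` and `n ≥ ℓ + 2`, the total number of `ℓ`-peaks over all
flattened Catalan words of length `n` equals
`(3^(n - ℓ - 2)·(2n + 1 - 2ℓ) - 1)/4`. -/
theorem flatCat_total_lPeaks (ℓ n : ℕ) (hℓ : 1 ≤ ℓ) (hn : ℓ + 2 ≤ n) :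
    ((∑ᶠ w ∈ FlatCat n, lPeakCount n w ℓ : ℕ) : ℚ) =
      (3 ^ (n - ℓ - 2) * (2 * (n : ℚ) + 1 - 2 * (ℓ : ℚ)) - 1) / 4 := by
  obtain ⟨m, rfl⟩ : ∃ m, n = ℓ + 2 + m := ⟨n - ℓ - 2, by omega⟩
  have hL : ((∑ᶠ w ∈ FlatCat (ℓ+2+m), lPeakCount (ℓ+2+m) w ℓ : ℕ) : ℚ)
      = SQ ℓ (ℓ+2+m) := by
    rw [finsum_mem_eq_finite_toFinset_sum _ (flatcat_finite (ℓ+2+m))]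
    unfold SQ FC
    push_cast
    rfl
  rw [hL, (SM_closed hℓ m).1, show ℓ+2+m-ℓ-2 = m by omega]
  push_cast
  ring
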